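/- Let (X,d) be a metric space equipped with a finite Borel measure μ, let s ∈ ℝ, ε > 0, K > 0, and let T ⊆ X be a measurable set of diameter less than ε with a distinguished point x_T ∈ T. If μ(𝒜(x_T,s,ε)) ≤ K·ε, then |μ(B(x_T,s))·μ(T) − (μ × μ)({(x,y) ∈ T × X : d(x,y) < s})| ≤ K·ε·μ(T). -/

import Mathlib

open MeasureTheory Set

/-- Let `(X,d)` be a metric space with a finite Borel measure `μ`, let
`s ∈ ℝ`, `ε > 0`, `K > 0`, and let `T ⊆ X` be a measurable set of diameter less than `ε`
with a distinguished point `x_T ∈ T`. If `μ(𝒜(x_T,s,ε)) ≤ K·ε` then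
`|μ(B(x_T,s))·μ(T) − (μ×μ)({(x,y) ∈ T × X : d(x,y) < s})| ≤ K·ε·μ(T)`. -/
theorem prod_measure_ball_estimate {X : Type*} [MeasurableSpace X] [MetricSpace X]
    [BorelSpace X] (μ : Measure X) [IsFiniteMeasure μ]
    (s ε K : ℝ) (hε : 0 < ε) (hK : 0 < K)
    (T : Set X) (hTm : MeasurableSet T) (hT : EMetric.diam T < ENNReal.ofReal ε)
    (xT : X) (hxT : xT ∈ T)
    (hann : (μ {y | s - ε ≤ dist xT y ∧ dist xT y < s + ε}).toReal ≤ K * ε) :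
    |(μ (Metric.ball xT s)).toReal * (μ T).toReal -
        ((μ.prod μ) {p : X × X | p.1 ∈ T ∧ dist p.1 p.2 < s}).toReal|
      ≤ K * ε * (μ T).toReal := by
  set A : Set X := {y | s - ε ≤ dist xT y ∧ dist xT y < s + ε} with hAdef
  set S : Set (X × X) := {p : X × X | p.1 ∈ T ∧ dist p.1 p.2 < s} with hSdef
  set B : Set X := Metric.ball xT s with hBdef
  have hdistT : ∀ x ∈ T, dist x xT < ε := by
    intro x hx
    have h1 : edist x xT < ENNReal.ofReal ε :=
      lt_of_le_of_lt (EMetric.edist_le_diam_of_mem hx hxT) hT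
    exact (edist_lt_ofReal.mp h1)
  -- sandwich S between two measurable rectangles
  have hsub1 : S ⊆ T ×ˢ (B ∪ A) := by
    rintro ⟨x, y⟩ ⟨hx, hy⟩
    refine ⟨hx, ?_⟩
    by_cases hyA : y ∈ A
    · exact Or.inr hyA
    · left
      simp only [hBdef, Metric.mem_ball, dist_comm]
      by_contra h
      push_neg at h
      have hge : s + ε ≤ dist xT y := by
        by_contra h2
        push_neg at h2
        exact hyA ⟨by linarith, h2⟩
      have htri : dist xT y ≤ dist xT x + dist x y := dist_triangle _ _ _
      have hxe : dist xT x < ε := by rw [dist_comm]; exact hdistT x hx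
      simp only [mem_setOf_eq] at hy
      linarith
  have hsub2 : T ×ˢ (B \ A) ⊆ S := by
    rintro ⟨x, y⟩ ⟨hx, hyB, hyA⟩
    refine ⟨hx, ?_⟩
    simp only [hBdef, Metric.mem_ball, dist_comm] at hyB
    have hlt : dist xT y < s - ε := by
      by_contra h
      push_neg at h
      exact hyA ⟨h, by linarith⟩
    have htri : dist x y ≤ dist x xT + dist xT y := dist_triangle _ _ _
    have := hdistT x hx
    simp only [mem_setOf_eq]
    linarith
  -- upper bound
  have h1 : (μ.prod μ) S ≤ μ T * μ B + μ T * μ A := by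
    calc (μ.prod μ) S ≤ (μ.prod μ) (T ×ˢ (B ∪ A)) := measure_mono hsub1
      _ = μ T * μ (B ∪ A) := Measure.prod_prod _ _
      _ ≤ μ T * (μ B + μ A) := mul_le_mul_right (measure_union_le _ _) _
      _ = μ T * μ B + μ T * μ A := by ring
  -- lower bound
  have h2 : μ T * μ B ≤ (μ.prod μ) S + μ T * μ A := by
    have hB : μ B ≤ μ (B \ A) + μ A :=
      (measure_le_inter_add_diff μ B A).trans (by
        rw [add_comm]
        exact add_le_add_right (measure_mono inter_subset_right) _)
    calc μ T * μ B ≤ μ T * (μ (B \ A) + μ A) := mul_le_mul_right hB _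
      _ = μ T * μ (B \ A) + μ T * μ A := by ring
      _ = (μ.prod μ) (T ×ˢ (B \ A)) + μ T * μ A := by rw [Measure.prod_prod]
      _ ≤ (μ.prod μ) S + μ T * μ A := add_le_add_left (measure_mono hsub2) _
  -- pass to reals
  have hfT : μ T ≠ ⊤ := measure_ne_top μ T
  have hfB : μ B ≠ ⊤ := measure_ne_top μ B
  have hfA : μ A ≠ ⊤ := measure_ne_top μ A
  have hfS : (μ.prod μ) S ≠ ⊤ := by
    have := measure_ne_top (μ.prod μ) Set.univ
    exact ne_top_of_le_ne_top this (measure_mono (subset_univ _))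
  have hAK : (μ T).toReal * (μ A).toReal ≤ K * ε * (μ T).toReal := by
    rw [mul_comm]
    exact mul_le_mul_of_nonneg_right hann ENNReal.toReal_nonneg
  rw [abs_sub_le_iff]
  constructor
  · have := ENNReal.toReal_mono (by finiteness) h2
    rw [ENNReal.toReal_add hfS (by finiteness), ENNReal.toReal_mul, ENNReal.toReal_mul] at this
    nlinarith [ENNReal.toReal_nonneg (a := μ T)]
  · have := ENNReal.toReal_mono (by finiteness) h1
    rw [ENNReal.toReal_add (by finiteness) (by finiteness), ENNReal.toReal_mul,
      ENNReal.toReal_mul] at this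
    nlinarith [ENNReal.toReal_nonneg (a := μ T)]
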